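/- Let X, X' be i.i.d. real random variables. If E[|X X'|^{2+4α} / (1 + log⁺|X X'|)^{4+4α}] < ∞ for some α > 0, then E[|X|^{2+4α} / (1 + log⁺|X|)^{4+4α}] < ∞. -/

import Mathlib

open MeasureTheory ProbabilityTheory

private lemma aux_denom (t : ℝ) : (1:ℝ) ≤ 1 + max (Real.log t) 0 := by
  have := le_max_right (Real.log t) 0; linarith

private lemma aux_nonneg {p q : ℝ} {t : ℝ} (ht : 0 ≤ t) :
    0 ≤ t ^ p / (1 + max (Real.log t) 0) ^ q :=
  div_nonneg (Real.rpow_nonneg ht p)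
    (Real.rpow_nonneg (by linarith [aux_denom t]) q)

private lemma aux_small {p q : ℝ} (hp : 0 ≤ p) (hq : 0 ≤ q) {t : ℝ} (ht0 : 0 ≤ t)
    (ht : t ≤ Real.exp 2) :
    t ^ p / (1 + max (Real.log t) 0) ^ q ≤ Real.exp (2 * p) := by
  have h1 : (1:ℝ) ≤ (1 + max (Real.log t) 0) ^ q :=
    Real.one_le_rpow (aux_denom t) hq
  calc t ^ p / (1 + max (Real.log t) 0) ^ q ≤ t ^ p :=
        div_le_self (Real.rpow_nonneg ht0 p) h1
    _ ≤ (Real.exp 2) ^ p := Real.rpow_le_rpow ht0 ht hp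
    _ = Real.exp (2 * p) := (Real.exp_mul 2 p).symm

private lemma aux_shrink {p q : ℝ} (hp : 0 ≤ p) (hq : 0 ≤ q) {t s : ℝ} (ht : 0 ≤ t)
    (hs0 : 0 < s) (hs1 : s ≤ 1) :
    s ^ p * (t ^ p / (1 + max (Real.log t) 0) ^ q)
      ≤ (t * s) ^ p / (1 + max (Real.log (t * s)) 0) ^ q := by
  have hnum : (t * s) ^ p = t ^ p * s ^ p := Real.mul_rpow ht hs0.le
  have hlog : max (Real.log (t * s)) 0 ≤ max (Real.log t) 0 := by
    rcases eq_or_lt_of_le ht with h | h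
    · simp [← h]
    · have hts : 0 < t * s := mul_pos h hs0
      have : Real.log (t * s) ≤ Real.log t :=
        Real.log_le_log hts (by nlinarith)
      exact max_le_max this le_rfl
  have hd : (1 + max (Real.log (t*s)) 0) ^ q ≤ (1 + max (Real.log t) 0) ^ q :=
    Real.rpow_le_rpow (by linarith [aux_denom (t*s)]) (by linarith) hq
  rw [hnum, mul_comm (t ^ p) (s ^ p), ← mul_div_assoc]
  apply div_le_div_of_nonneg_left ?_ ?_ hd
  · positivity
  · exact lt_of_lt_of_le one_pos (Real.one_le_rpow (aux_denom (t*s)) hq)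

private lemma aux_mono {p q : ℝ} (hp : 0 < p) (hq : 0 < q) (hqp : q ≤ 3 * p)
    {t u : ℝ} (ht : Real.exp 2 ≤ t) (htu : t ≤ u) :
    t ^ p / (1 + max (Real.log t) 0) ^ q ≤ u ^ p / (1 + max (Real.log u) 0) ^ q := by
  have ht0 : 0 < t := lt_of_lt_of_le (Real.exp_pos 2) ht
  have hu0 : 0 < u := lt_of_lt_of_le ht0 htu
  have hlt : 2 ≤ Real.log t := by
    have := Real.log_le_log (Real.exp_pos 2) ht
    rwa [Real.log_exp] at this
  have hlu : Real.log t ≤ Real.log u := Real.log_le_log ht0 htu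
  set a := 1 + Real.log t with ha
  set b := 1 + Real.log u with hb
  have hmaxt : max (Real.log t) 0 = Real.log t := max_eq_left (by linarith)
  have hmaxu : max (Real.log u) 0 = Real.log u := max_eq_left (by linarith)
  rw [hmaxt, hmaxu, ← ha, ← hb]
  have ha3 : 3 ≤ a := by simp [ha]; linarith
  have ha0 : 0 < a := by linarith
  have hb0 : 0 < b := by simp [hb]; linarith
  set v := Real.log u - Real.log t with hv
  have hv0 : 0 ≤ v := by linarith
  have hup : u ^ p = t ^ p * Real.exp (p * v) := by
    have hr : u = t * (u / t) := by field_simp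
    have hlogr : Real.log (u / t) = v := by rw [Real.log_div hu0.ne' ht0.ne']
    have hrpos : 0 < u / t := div_pos hu0 ht0
    calc u ^ p = (t * (u/t)) ^ p := by rw [← hr]
      _ = t ^ p * (u/t) ^ p := Real.mul_rpow ht0.le hrpos.le
      _ = t ^ p * Real.exp (p * v) := by
          rw [Real.rpow_def_of_pos hrpos, hlogr, mul_comm v p]
  have hbq : b ^ q ≤ a ^ q * Real.exp (p * v) := by
    have h1 : b ≤ a * Real.exp (v / a) := by
      have := Real.add_one_le_exp (v / a)
      have h2 : a * (v / a + 1) ≤ a * Real.exp (v / a) :=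
        mul_le_mul_of_nonneg_left this ha0.le
      have : a * (v / a + 1) = a + v := by field_simp; ring
      have hab : b = a + v := by rw [hb, ha, hv]; ring
      linarith
    calc b ^ q ≤ (a * Real.exp (v / a)) ^ q :=
          Real.rpow_le_rpow hb0.le h1 hq.le
      _ = a ^ q * (Real.exp (v / a)) ^ q :=
          Real.mul_rpow ha0.le (Real.exp_pos _).le
      _ = a ^ q * Real.exp (v / a * q) := by rw [← Real.exp_mul]
      _ ≤ a ^ q * Real.exp (p * v) := by
          apply mul_le_mul_of_nonneg_left _ (Real.rpow_nonneg ha0.le q)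
          apply Real.exp_le_exp.mpr
          rw [div_mul_eq_mul_div, div_le_iff₀ ha0]
          calc v * q ≤ v * (3 * p) := mul_le_mul_of_nonneg_left hqp hv0
            _ ≤ p * v * a := by
                nlinarith [mul_nonneg (mul_nonneg hp.le hv0) (by linarith : (0:ℝ) ≤ a - 3)]
  have haq : 0 < a ^ q := Real.rpow_pos_of_pos ha0 q
  have hbq0 : 0 < b ^ q := Real.rpow_pos_of_pos hb0 q
  rw [div_le_div_iff₀ haq hbq0, hup]
  have htp : 0 ≤ t ^ p := Real.rpow_nonneg ht0.le p
  calc t ^ p * b ^ q ≤ t ^ p * (a ^ q * Real.exp (p * v)) :=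
        mul_le_mul_of_nonneg_left hbq htp
    _ = t ^ p * Real.exp (p * v) * a ^ q := by ring

private lemma aux_key {p q : ℝ} (hp : 0 < p) (hq : 0 < q) (hqp : q ≤ 3 * p)
    {c t s : ℝ} (hc0 : 0 < c) (hc1 : c ≤ 1) (ht : 0 ≤ t) (hs : c ≤ s) :
    t ^ p / (1 + max (Real.log t) 0) ^ q
      ≤ Real.exp (2 * p)
        + c⁻¹ ^ p * ((t * s) ^ p / (1 + max (Real.log (t * s)) 0) ^ q) := by
  have hs0 : 0 < s := lt_of_lt_of_le hc0 hs
  have hfts : 0 ≤ (t * s) ^ p / (1 + max (Real.log (t * s)) 0) ^ q :=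
    aux_nonneg (mul_nonneg ht hs0.le)
  have hcinv1 : (1:ℝ) ≤ c⁻¹ := by
    rw [le_inv_comm₀ one_pos hc0]; simpa using hc1
  have hcinv : (1:ℝ) ≤ c⁻¹ ^ p := Real.one_le_rpow hcinv1 hp.le
  rcases le_or_gt t (Real.exp 2) with hsm | hbig
  · have h1 := aux_small hp.le hq.le ht hsm
    have h2 : 0 ≤ c⁻¹ ^ p * ((t * s) ^ p / (1 + max (Real.log (t * s)) 0) ^ q) :=
      mul_nonneg (by linarith) hfts
    linarith
  · rcases le_or_gt s 1 with hs1 | hs1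
    · have h1 := aux_shrink hp.le hq.le ht hs0 hs1
      have h2 : c ^ p ≤ s ^ p := Real.rpow_le_rpow hc0.le hs hp.le
      have hft : 0 ≤ t ^ p / (1 + max (Real.log t) 0) ^ q := aux_nonneg ht
      have h3 : c ^ p * (t ^ p / (1 + max (Real.log t) 0) ^ q)
          ≤ (t * s) ^ p / (1 + max (Real.log (t * s)) 0) ^ q :=
        le_trans (mul_le_mul_of_nonneg_right h2 hft) h1
      have h4 : c⁻¹ ^ p * c ^ p = 1 := by
        rw [← Real.mul_rpow (inv_nonneg.2 hc0.le) hc0.le, inv_mul_cancel₀ hc0.ne',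
          Real.one_rpow]
      have hexp : 0 ≤ Real.exp (2 * p) := (Real.exp_pos _).le
      have h5 : t ^ p / (1 + max (Real.log t) 0) ^ q
          ≤ c⁻¹ ^ p * ((t * s) ^ p / (1 + max (Real.log (t * s)) 0) ^ q) := by
        calc t ^ p / (1 + max (Real.log t) 0) ^ q
            = c⁻¹ ^ p * (c ^ p * (t ^ p / (1 + max (Real.log t) 0) ^ q)) := by
              rw [← mul_assoc, h4, one_mul]
          _ ≤ c⁻¹ ^ p * ((t * s) ^ p / (1 + max (Real.log (t * s)) 0) ^ q) :=
              mul_le_mul_of_nonneg_left h3 (by linarith)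
      linarith
    · have hts : t ≤ t * s := le_mul_of_one_le_right ht hs1.le
      have h1 := aux_mono hp hq hqp hbig.le hts
      have h2 : (t * s) ^ p / (1 + max (Real.log (t * s)) 0) ^ q
          ≤ c⁻¹ ^ p * ((t * s) ^ p / (1 + max (Real.log (t * s)) 0) ^ q) :=
        le_mul_of_one_le_left hfts hcinv
      have hexp : 0 ≤ Real.exp (2 * p) := (Real.exp_pos _).le
      linarith

theorem stmt_4 {Ω : Type*} [MeasureSpace Ω] [IsProbabilityMeasure (ℙ : Measure Ω)]
    (X X' : Ω → ℝ) (hX : Measurable X) (hX' : Measurable X')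
    (hindep : IndepFun X X' ℙ) (hid : Measure.map X ℙ = Measure.map X' ℙ)
    (hvar : ∫ ω, (X ω) ^ 2 ∂ℙ = 1)
    (α : ℝ) (hα : 0 < α)
    (hmom : Integrable (fun ω =>
      |X ω * X' ω| ^ (2 + 4 * α) / (1 + max (Real.log |X ω * X' ω|) 0) ^ (4 + 4 * α)) ℙ) :
    Integrable (fun ω =>
      |X ω| ^ (2 + 4 * α) / (1 + max (Real.log |X ω|) 0) ^ (4 + 4 * α)) ℙ := by
  set p : ℝ := 2 + 4 * α with hpdef
  set q : ℝ := 4 + 4 * α with hqdef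
  have hp : 0 < p := by rw [hpdef]; linarith
  have hq : 0 < q := by rw [hqdef]; linarith
  have hqp : q ≤ 3 * p := by rw [hpdef, hqdef]; linarith
  -- Step 1: find c with positive probability that |X'| ≥ c
  have hpos : ∃ c : ℝ, 0 < c ∧ c ≤ 1 ∧ 0 < ℙ {ω | c ≤ |X' ω|} := by
    by_contra hcon
    push_neg at hcon
    have hzero : ∀ n : ℕ, ℙ {ω | ((n : ℝ) + 1)⁻¹ ≤ |X' ω|} = 0 := by
      intro n
      have h1 : (0:ℝ) < ((n : ℝ) + 1)⁻¹ := by positivity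
      have h2 : ((n : ℝ) + 1)⁻¹ ≤ 1 := by
        rw [inv_le_one_iff₀]; right; have : (0:ℝ) ≤ (n:ℝ) := Nat.cast_nonneg n; linarith
      exact le_zero_iff.mp (hcon _ h1 h2)
    have hsub : {ω | X' ω ≠ 0} ⊆ ⋃ n : ℕ, {ω | ((n : ℝ) + 1)⁻¹ ≤ |X' ω|} := by
      intro ω hω
      have habs : 0 < |X' ω| := abs_pos.mpr hω
      obtain ⟨n, hn⟩ := exists_nat_one_div_lt habs
      refine Set.mem_iUnion.2 ⟨n, ?_⟩
      rw [Set.mem_setOf_eq]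
      rw [one_div] at hn
      linarith
    have hX'zero : ℙ {ω | X' ω ≠ 0} = 0 :=
      measure_mono_null hsub (measure_iUnion_null hzero)
    have hXzero : ℙ {ω | X ω ≠ 0} = 0 := by
      have h1 : Measure.map X ℙ ({(0:ℝ)}ᶜ) = ℙ (X ⁻¹' {(0:ℝ)}ᶜ) :=
        Measure.map_apply hX (measurableSet_singleton 0).compl
      have h2 : Measure.map X' ℙ ({(0:ℝ)}ᶜ) = ℙ (X' ⁻¹' {(0:ℝ)}ᶜ) :=
        Measure.map_apply hX' (measurableSet_singleton 0).compl
      have e1 : X ⁻¹' ({(0:ℝ)}ᶜ) = {ω | X ω ≠ 0} := by ext ω; simp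
      have e2 : X' ⁻¹' ({(0:ℝ)}ᶜ) = {ω | X' ω ≠ 0} := by ext ω; simp
      calc ℙ {ω | X ω ≠ 0} = Measure.map X ℙ ({(0:ℝ)}ᶜ) := by rw [h1, e1]
        _ = Measure.map X' ℙ ({(0:ℝ)}ᶜ) := by rw [hid]
        _ = 0 := by rw [h2, e2, hX'zero]
    have hXae : ∀ᵐ ω ∂ℙ, X ω = 0 := by
      rw [ae_iff]; simpa using hXzero
    have hint : ∫ ω, (X ω) ^ 2 ∂ℙ = 0 := by
      have : (fun ω => (X ω) ^ 2) =ᵐ[ℙ] fun _ => (0:ℝ) :=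
        hXae.mono fun ω h => by simp [h]
      rw [integral_congr_ae this, integral_zero]
    rw [hvar] at hint
    norm_num at hint
  obtain ⟨c, hc0, hc1, hδ⟩ := hpos
  -- Step 2: set up functions
  set φ : ℝ → ℝ := fun x => |x| ^ p / (1 + max (Real.log |x|) 0) ^ q with hφdef
  have hφm : Measurable φ := by rw [hφdef]; measurability
  have hφ0 : ∀ x, 0 ≤ φ x := fun x => aux_nonneg (abs_nonneg x)
  set g : ℝ → ENNReal := fun x => ENNReal.ofReal (φ x) with hgdef
  set h : ℝ → ENNReal := fun x => if c ≤ |x| then 1 else 0 with hhdef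
  have hgm : Measurable g := ENNReal.measurable_ofReal.comp hφm
  have hSm : MeasurableSet {x : ℝ | c ≤ |x|} := measurable_abs measurableSet_Ici
  have hhm : Measurable h := Measurable.ite hSm measurable_const measurable_const
  have hEm : MeasurableSet {ω | c ≤ |X' ω|} := hX'.abs measurableSet_Ici
  have hprod : ∫⁻ ω, g (X ω) * h (X' ω) ∂ℙ
      = (∫⁻ ω, g (X ω) ∂ℙ) * ∫⁻ ω, h (X' ω) ∂ℙ :=
    lintegral_mul_eq_lintegral_mul_lintegral_of_indepFun'' (hgm.comp hX).aemeasurable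
      (hhm.comp hX').aemeasurable (hindep.comp hgm hhm)
  have hH : ∫⁻ ω, h (X' ω) ∂ℙ = ℙ {ω | c ≤ |X' ω|} := by
    have e : (fun ω => h (X' ω))
        = Set.indicator {ω | c ≤ |X' ω|} (fun _ => (1 : ENNReal)) := by
      ext ω
      by_cases hω : c ≤ |X' ω| <;> simp [hhdef, hω, Set.indicator_apply]
    rw [e, lintegral_indicator hEm]
    simp
  -- Step 3: pointwise bound
  set A : ENNReal := ENNReal.ofReal (Real.exp (2 * p)) with hA
  set B : ENNReal := ENNReal.ofReal (c⁻¹ ^ p) with hB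
  have hptwise : ∀ ω, g (X ω) * h (X' ω)
      ≤ A + B * ENNReal.ofReal (φ (X ω * X' ω)) := by
    intro ω
    by_cases hω : c ≤ |X' ω|
    · have hh1 : h (X' ω) = 1 := by rw [hhdef]; simp [hω]
      rw [hh1, mul_one]
      have key := aux_key hp hq hqp hc0 hc1 (abs_nonneg (X ω)) hω
      rw [← abs_mul] at key
      calc g (X ω) ≤ ENNReal.ofReal (Real.exp (2 * p) + c⁻¹ ^ p * φ (X ω * X' ω)) :=
            ENNReal.ofReal_le_ofReal key
        _ ≤ A + ENNReal.ofReal (c⁻¹ ^ p * φ (X ω * X' ω)) := ENNReal.ofReal_add_le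
        _ = A + B * ENNReal.ofReal (φ (X ω * X' ω)) := by
            rw [ENNReal.ofReal_mul (by positivity)]
    · have hh0 : h (X' ω) = 0 := by rw [hhdef]; simp [hω]
      rw [hh0, mul_zero]
      exact zero_le
  -- Step 4: finiteness
  have hfin : ∫⁻ ω, ENNReal.ofReal (φ (X ω * X' ω)) ∂ℙ < ⊤ := by
    have h1 : ∫⁻ ω, (‖φ (X ω * X' ω)‖₊ : ENNReal) ∂ℙ < ⊤ := hmom.2
    refine lt_of_eq_of_lt ?_ h1
    exact lintegral_congr fun ω => (Real.enorm_eq_ofReal (hφ0 _)).symm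
  have hmono : Measurable fun ω => ENNReal.ofReal (φ (X ω * X' ω)) :=
    ENNReal.measurable_ofReal.comp (hφm.comp (hX.mul hX'))
  have hGH_fin : ∫⁻ ω, g (X ω) * h (X' ω) ∂ℙ < ⊤ := by
    calc ∫⁻ ω, g (X ω) * h (X' ω) ∂ℙ
        ≤ ∫⁻ ω, (A + B * ENNReal.ofReal (φ (X ω * X' ω))) ∂ℙ := lintegral_mono hptwise
      _ = A * ℙ Set.univ + B * ∫⁻ ω, ENNReal.ofReal (φ (X ω * X' ω)) ∂ℙ := by
          rw [lintegral_add_left measurable_const, lintegral_const,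
            lintegral_const_mul _ hmono]
      _ < ⊤ := by
          apply ENNReal.add_lt_top.mpr
          constructor
          · exact ENNReal.mul_lt_top ENNReal.ofReal_lt_top (measure_lt_top _ _)
          · exact ENNReal.mul_lt_top ENNReal.ofReal_lt_top hfin
  have hδ' : ℙ {ω | c ≤ |X' ω|} ≠ 0 := hδ.ne'
  have hGfin : ∫⁻ ω, g (X ω) ∂ℙ < ⊤ := by
    by_contra htop
    have htop' : ∫⁻ ω, g (X ω) ∂ℙ = ⊤ := by
      simpa [lt_top_iff_ne_top, not_not] using htop
    rw [hprod, hH, htop', ENNReal.top_mul hδ'] at hGH_fin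
    exact absurd hGH_fin (by simp)
  refine ⟨(hφm.comp hX).aestronglyMeasurable, ?_⟩
  rw [hasFiniteIntegral_def]
  refine lt_of_eq_of_lt ?_ hGfin
  exact lintegral_congr fun ω => Real.enorm_eq_ofReal (hφ0 _)
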